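/- If p, q, r satisfy the noncommutative Boussinesq lattice system, then the conservation law q₁₁q₀₁ - r₀₁ - p₁₀ - q₁₀q = q₁₁q₁₀ - r₁₀ - p₀₁ - q₀₁q holds. -/
import Mathlib


/-- If `p, q, r` satisfy the noncommutative Boussinesq lattice system
`(p + q q₁₁ - r₁₁)(p₀₁ - p₁₀) = (a-b) q`,
`(q₀₁ - q₁₀)(p + q q₁₁ - r₁₁) = b - a`,
`(r₀₁ - r₁₀)(p + q q₁₁ - r₁₁) = (b-a) q₁₁`
(with `p + q q₁₁ - r₁₁` invertible and `a, b` central), then the conservation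
law `q₁₁q₀₁ - r₀₁ - p₁₀ - q₁₀q = q₁₁q₁₀ - r₁₀ - p₀₁ - q₀₁q` holds. -/
theorem boussinesq_conservation_law {R : Type*} [DivisionRing R]
    (a b p q r p10 p01 q10 q01 q11 r10 r01 r11 : R)
    (ha : ∀ s : R, a * s = s * a) (hb : ∀ s : R, b * s = s * b)
    (hS : p + q * q11 - r11 ≠ 0)
    (e1 : (p + q * q11 - r11) * (p01 - p10) = (a - b) * q)
    (e2 : (q01 - q10) * (p + q * q11 - r11) = b - a)
    (e3 : (r01 - r10) * (p + q * q11 - r11) = (b - a) * q11) :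
    q11 * q01 - r01 - p10 - q10 * q = q11 * q10 - r10 - p01 - q01 * q := by
  set S := p + q * q11 - r11 with hSdef
  have hc : ∀ s : R, (b - a) * s = s * (b - a) := fun s => by
    rw [sub_mul, mul_sub, hb, ha]
  have hc' : ∀ s : R, (a - b) * s = s * (a - b) := fun s => by
    rw [sub_mul, mul_sub, hb, ha]
  have h2 : q01 - q10 = (b - a) * S⁻¹ := (eq_mul_inv_iff_mul_eq₀ hS).mpr e2
  have h3 : r01 - r10 = ((b - a) * q11) * S⁻¹ := (eq_mul_inv_iff_mul_eq₀ hS).mpr e3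
  have h1 : p01 - p10 = S⁻¹ * ((a - b) * q) := (eq_inv_mul_iff_mul_eq₀ hS).mpr e1
  have h1' : p01 = p10 + (a - b) * S⁻¹ * q := by
    rw [← mul_assoc, ← hc' S⁻¹] at h1
    exact eq_add_of_sub_eq' (by rw [← h1])
  have h2' : q01 = q10 + (b - a) * S⁻¹ := eq_add_of_sub_eq' (by rw [← h2])
  have h3' : r01 = r10 + (b - a) * q11 * S⁻¹ := by
    exact eq_add_of_sub_eq' (by rw [← h3])
  have hcom : q11 * ((b - a) * S⁻¹) = (b - a) * q11 * S⁻¹ := by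
    rw [← mul_assoc, ← hc q11]
  rw [h1', h2', h3', mul_add, hcom]
  noncomm_ring
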